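/- Let P be a regular n×n complex matrix polynomial of degree d, let ℓ ≥ 1 divide d, let ℒ(λ) be an (ε,n,η,n)-block Kronecker ℓ-ification of P built from a solution M(λ) of (Λ_η(λ^ℓ)^T ⊗ I_n) M(λ) (Λ_ε(λ^ℓ) ⊗ I_n) = P(λ), and let λ0 ∈ ℂ be a simple eigenvalue of P, i.e., a root of det P(λ) of multiplicity exactly 1. Let x, y ∈ ℂ^n be nonzero with P(λ0) x = 0 and y* P(λ0) = 0, and set z = H(λ0; ε, η, M) x and w = [Λ_η(conj(λ0)^ℓ) ⊗ I_n ; R_ε(conj(λ0)^ℓ) M(λ0)* (Λ_η(conj(λ0)^ℓ) ⊗ I_n)] y. Then z and w are nonzero, ℒ(λ0) z = 0, w* ℒ(λ0) = 0, and |w* ℒ′(λ0) z| = |y* P′(λ0) x|, where ℒ′ and P′ denote entrywise derivatives, (·)* the conjugate transpose, and conj(λ0) the complex conjugate of λ0. -/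

import Mathlib

open Matrix BigOperators

noncomputable section

/-- Evaluation at `x` of the matrix polynomial with coefficients `C 0, …, C N`. -/
def mpEval {α β : Type*} (N : ℕ) (C : ℕ → Matrix α β ℂ) (x : ℂ) : Matrix α β ℂ :=
  ∑ i ∈ Finset.range (N + 1), x ^ i • C i

/-- Entrywise derivative of the matrix polynomial, evaluated at `x`. -/
def mpDer {α β : Type*} (N : ℕ) (C : ℕ → Matrix α β ℂ) (x : ℂ) : Matrix α β ℂ :=
  ∑ i ∈ Finset.range (N + 1), ((i : ℂ) * x ^ (i - 1)) • C i

/-- Spectral norm (operator 2-norm, i.e. largest singular value) of a complex matrix. -/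
def sNorm {α β : Type*} [Fintype α] [Fintype β] [DecidableEq β] (A : Matrix α β ℂ) : ℝ :=
  ‖LinearMap.toContinuousLinearMap (Matrix.toEuclideanLin A)‖

/-- Euclidean norm of a complex vector. -/
def vNorm {α : Type*} [Fintype α] (v : α → ℂ) : ℝ :=
  Real.sqrt (∑ i, ‖v i‖ ^ 2)

/-- `Λ_k(x^ℓ) ⊗ I_n`, a `(k+1)n × n` matrix whose `i`-th (0-based) `n × n` block is
`x^(ℓ(k−i)) I_n`. -/
def LamI (n k l : ℕ) (x : ℂ) : Matrix (Fin (k + 1) × Fin n) (Fin n) ℂ :=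
  Matrix.of fun p s => if p.2 = s then x ^ (l * (k - (p.1 : ℕ))) else 0

/-- `L_k(x^ℓ) ⊗ I_n`, a `kn × (k+1)n` matrix. -/
def LkI (n k l : ℕ) (x : ℂ) : Matrix (Fin k × Fin n) (Fin (k + 1) × Fin n) ℂ :=
  Matrix.of fun p q =>
    if p.2 = q.2 then
      if (q.1 : ℕ) = (p.1 : ℕ) then -1
      else if (q.1 : ℕ) = (p.1 : ℕ) + 1 then x ^ l else 0
    else 0

/-- The degree-`0` coefficient of `L_k(λ^ℓ) ⊗ I_n`. -/
def LkI0 (n k : ℕ) : Matrix (Fin k × Fin n) (Fin (k + 1) × Fin n) ℂ :=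
  Matrix.of fun p q => if p.2 = q.2 ∧ (q.1 : ℕ) = (p.1 : ℕ) then -1 else 0

/-- The degree-`ℓ` coefficient of `L_k(λ^ℓ) ⊗ I_n`. -/
def LkI1 (n k : ℕ) : Matrix (Fin k × Fin n) (Fin (k + 1) × Fin n) ℂ :=
  Matrix.of fun p q => if p.2 = q.2 ∧ (q.1 : ℕ) = (p.1 : ℕ) + 1 then 1 else 0

/-- `R_k(x^ℓ)`: `n × n` blocks `x^(ℓ(i−j)) I_n` for `j ≤ i` (0-based), `0` otherwise. -/
def Rmat (n k l : ℕ) (x : ℂ) : Matrix (Fin k × Fin n) (Fin (k + 1) × Fin n) ℂ :=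
  Matrix.of fun p q =>
    if p.2 = q.2 ∧ (q.1 : ℕ) ≤ (p.1 : ℕ) then x ^ (l * ((p.1 : ℕ) - (q.1 : ℕ))) else 0

/-- `S_k(x^ℓ)`: `n × n` blocks `x^(ℓ(k+i−j)) I_n` for `i < j` (0-based), `0` otherwise. -/
def Smat (n k l : ℕ) (x : ℂ) : Matrix (Fin k × Fin n) (Fin (k + 1) × Fin n) ℂ :=
  Matrix.of fun p q =>
    if p.2 = q.2 ∧ (p.1 : ℕ) < (q.1 : ℕ) then x ^ (l * (k + (p.1 : ℕ) - (q.1 : ℕ))) else 0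

/-- The block column `H(x; p, q, N) = [Λ_p(x^ℓ) ⊗ I_n ; R_q(x^ℓ) N(x) (Λ_p(x^ℓ) ⊗ I_n)]`. -/
def Hmat (n l p q : ℕ) (N : ℂ → Matrix (Fin (q + 1) × Fin n) (Fin (p + 1) × Fin n) ℂ)
    (x : ℂ) : Matrix ((Fin (p + 1) × Fin n) ⊕ (Fin q × Fin n)) (Fin n) ℂ :=
  Matrix.of fun r c =>
    Sum.elim (fun a => LamI n p l x a c)
      (fun a => (Rmat n q l x * (N x * LamI n p l x)) a c) r

/-- The block column `G(x; p, q, N) = [x^(qℓ)(Λ_p(x^ℓ) ⊗ I_n) ; −S_q(x^ℓ) N(x) (Λ_p(x^ℓ) ⊗ I_n)]`. -/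
def Gmat (n l p q : ℕ) (N : ℂ → Matrix (Fin (q + 1) × Fin n) (Fin (p + 1) × Fin n) ℂ)
    (x : ℂ) : Matrix ((Fin (p + 1) × Fin n) ⊕ (Fin q × Fin n)) (Fin n) ℂ :=
  Matrix.of fun r c =>
    Sum.elim (fun a => x ^ (q * l) * LamI n p l x a c)
      (fun a => (-(Smat n q l x * (N x * LamI n p l x))) a c) r

/-- Coefficients of the `(ε,n,η,n)`-block Kronecker `ℓ`-ification
`ℒ(λ) = [[M(λ), L_η(λ^ℓ)ᵀ ⊗ I_n], [L_ε(λ^ℓ) ⊗ I_n, 0]]`. -/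
def LcalCoef (n l ε η : ℕ)
    (M : ℕ → Matrix (Fin (η + 1) × Fin n) (Fin (ε + 1) × Fin n) ℂ) (i : ℕ) :
    Matrix ((Fin (η + 1) × Fin n) ⊕ (Fin ε × Fin n))
      ((Fin (ε + 1) × Fin n) ⊕ (Fin η × Fin n)) ℂ :=
  Matrix.fromBlocks (M i)
    (if i = 0 then (LkI0 n η)ᵀ else if i = l then (LkI1 n η)ᵀ else 0)
    (if i = 0 then LkI0 n ε else if i = l then LkI1 n ε else 0) 0

/-- `det P(λ)` as a scalar polynomial, where `P(λ) = Σ_{i=0}^d A_i λ^i`. -/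
def detPoly (n d : ℕ) (A : ℕ → Matrix (Fin n) (Fin n) ℂ) : Polynomial ℂ :=
  (∑ i ∈ Finset.range (d + 1), (Polynomial.X : Polynomial ℂ) ^ i • (A i).map Polynomial.C).det

/-- The horizontal concatenation `[A_0 A_1 ⋯ A_d]`. -/
def rowConcat (n d : ℕ) (A : ℕ → Matrix (Fin n) (Fin n) ℂ) :
    Matrix (Fin n) (Fin (d + 1) × Fin n) ℂ :=
  Matrix.of fun r q => A (q.1 : ℕ) r q.2

/-- Coefficientwise eigenvalue condition number of `Q(λ) = Σ_{i=0}^N C_i λ^i` at the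
eigentriple `(v, x0, u)`. -/
def coeffCond {α β : Type*} [Fintype α] [Fintype β] [DecidableEq β] (N : ℕ)
    (C : ℕ → Matrix α β ℂ) (x0 : ℂ) (u : β → ℂ) (v : α → ℂ) : ℝ :=
  (∑ i ∈ Finset.range (N + 1), ‖x0‖ ^ i * sNorm (C i)) * vNorm u * vNorm v /
    (‖x0‖ * ‖dotProduct (star v) ((mpDer N C x0).mulVec u)‖)

/-- Normwise eigenvalue condition number of `P(λ) = Σ_{i=0}^d A_i λ^i` at `(y, x0, x)`. -/
def normCond (n d : ℕ) (A : ℕ → Matrix (Fin n) (Fin n) ℂ) (x0 : ℂ)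
    (x y : Fin n → ℂ) : ℝ :=
  sNorm (rowConcat n d A) * (∑ i ∈ Finset.range (d + 1), ‖x0‖ ^ i) *
      vNorm x * vNorm y /
    (‖x0‖ * ‖dotProduct (star y) ((mpDer d A x0).mulVec x)‖)

/-- Each `n × n` block of each coefficient `M_t`, `t = 0, …, ℓ`, is `0`, `I_n`,
or one of the coefficients `A_s` of `P`.  -/
def IsCompanionM (n d l ε η : ℕ) (A : ℕ → Matrix (Fin n) (Fin n) ℂ)
    (M : ℕ → Matrix (Fin (η + 1) × Fin n) (Fin (ε + 1) × Fin n) ℂ) : Prop :=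
  ∀ t ≤ l, ∀ (i : Fin (η + 1)) (j : Fin (ε + 1)),
    (Matrix.of fun r s => M t (i, r) (j, s)) = 0 ∨
    (Matrix.of fun r s => M t (i, r) (j, s)) = (1 : Matrix (Fin n) (Fin n) ℂ) ∨
    ∃ s ≤ d, (Matrix.of fun r s' => M t (i, r) (j, s')) = A s


lemma sum_fin_ite {k : ℕ} (m : ℕ) (g : Fin k → ℂ) :
    (∑ p : Fin k, if (p : ℕ) = m then g p else 0) = if hm : m < k then g ⟨m, hm⟩ else 0 := by
  split_ifs with hm
  · rw [Finset.sum_congr rfl (g := fun p => if p = (⟨m, hm⟩ : Fin k) then g p else 0)]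
    · simp
    · intro p _
      congr 1
      simp [Fin.ext_iff]
  · apply Finset.sum_eq_zero
    intro p _
    have : (p : ℕ) ≠ m := by omega
    simp [this]

lemma sum_fin_n_ite {n : ℕ} (r : Fin n) (g : Fin n → ℂ) :
    (∑ s : Fin n, if r = s then g s else 0) = g r := by
  simp [eq_comm (a := r)]

lemma LkI_mul_LamI (n k l : ℕ) (x : ℂ) : LkI n k l x * LamI n k l x = 0 := by
  ext p c
  simp only [Matrix.mul_apply, LkI, LamI, Matrix.of_apply, Fintype.sum_prod_type,
    Matrix.zero_apply]
  have : ∀ j : Fin (k+1), ∑ s : Fin n,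
      (if p.2 = s then (if (j:ℕ) = (p.1:ℕ) then (-1:ℂ) else if (j:ℕ) = (p.1:ℕ)+1 then x^l else 0) else 0) *
        (if s = c then x ^ (l*(k-(j:ℕ))) else 0)
      = if p.2 = c then (if (j:ℕ) = (p.1:ℕ) then (-1:ℂ) else if (j:ℕ) = (p.1:ℕ)+1 then x^l else 0) * x ^ (l*(k-(j:ℕ))) else 0 := by
    intro j
    rw [Finset.sum_eq_single p.2] <;> intros <;> simp_all [eq_comm] <;> split_ifs <;> simp_all
  rw [Finset.sum_congr rfl fun j _ => this j]
  by_cases hpc : p.2 = c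
  · simp only [hpc, if_true, eq_self_iff_true]
    have expand : ∀ j : Fin (k+1),
        (if (j:ℕ) = (p.1:ℕ) then (-1:ℂ) else if (j:ℕ) = (p.1:ℕ)+1 then x^l else 0) * x ^ (l*(k-(j:ℕ)))
        = (if (j:ℕ) = (p.1:ℕ) then (-1:ℂ) * x ^ (l*(k-(p.1:ℕ))) else 0)
          + (if (j:ℕ) = (p.1:ℕ)+1 then x^l * x ^ (l*(k-((p.1:ℕ)+1))) else 0) := by
      intro j
      by_cases h1 : (j:ℕ) = (p.1:ℕ)
      · simp [h1]
      · by_cases h2 : (j:ℕ) = (p.1:ℕ)+1 <;> simp [h1, h2]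
    rw [Finset.sum_congr rfl fun j _ => expand j, Finset.sum_add_distrib,
      sum_fin_ite, sum_fin_ite]
    have h1 : (p.1:ℕ) < k + 1 := by omega
    have h2 : (p.1:ℕ) + 1 < k + 1 := by omega
    rw [dif_pos h1, dif_pos h2, ← pow_add]
    have : l + l * (k - ((p.1:ℕ)+1)) = l * (k - (p.1:ℕ)) := by
      obtain ⟨t, ht⟩ : ∃ t, k - (p.1:ℕ) = t + 1 := ⟨k - (p.1:ℕ) - 1, by omega⟩
      have ht2 : k - ((p.1:ℕ)+1) = t := by omega
      rw [ht, ht2, Nat.mul_succ, Nat.add_comm]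
    rw [this]; ring
  · simp [hpc]

def Cmat (n k l : ℕ) (x : ℂ) : Matrix (Fin (k + 1) × Fin n) (Fin (k + 1) × Fin n) ℂ :=
  Matrix.of fun q q' => if (q.1 : ℕ) = k ∧ q.2 = q'.2 then x ^ (l * (k - (q'.1 : ℕ))) else 0

lemma sum_fin_ite' {k : ℕ} (m : ℕ) (c : Prop) [Decidable c] (g : Fin k → ℂ) :
    (∑ p : Fin k, if (p : ℕ) = m ∧ c then g p else 0)
      = if hm : m < k ∧ c then g ⟨m, hm.1⟩ else 0 := by
  by_cases hc : c
  · simp only [hc, and_true]; exact sum_fin_ite m g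
  · simp [hc]

lemma pow_shift (l a b : ℕ) (x : ℂ) (h : b < a) :
    x ^ l * x ^ (l * (a - 1 - b)) = x ^ (l * (a - b)) := by
  rw [← pow_add]
  congr 1
  obtain ⟨t, ht⟩ : ∃ t, a - b = t + 1 := ⟨a - b - 1, by omega⟩
  have ht2 : a - 1 - b = t := by omega
  rw [ht, ht2, Nat.mul_succ, Nat.add_comm]

lemma LkIt_mul_Rmat (n k l : ℕ) (x : ℂ) :
    (LkI n k l x)ᵀ * Rmat n k l x = Cmat n k l x - 1 := by
  ext ⟨i, r⟩ ⟨j, s⟩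
  simp only [Matrix.mul_apply, Matrix.transpose_apply, LkI, Rmat, Matrix.of_apply,
    Fintype.sum_prod_type, Matrix.sub_apply, Cmat, Matrix.one_apply]
  have inner : ∀ p1 : Fin k, ∑ p2 : Fin n,
      (if p2 = r then (if (i:ℕ) = (p1:ℕ) then (-1:ℂ) else if (i:ℕ) = (p1:ℕ)+1 then x^l else 0) else 0) *
        (if p2 = s ∧ (j:ℕ) ≤ (p1:ℕ) then x ^ (l*((p1:ℕ)-(j:ℕ))) else 0)
      = if r = s then (if (i:ℕ) = (p1:ℕ) then (-1:ℂ) else if (i:ℕ) = (p1:ℕ)+1 then x^l else 0) *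
          (if (j:ℕ) ≤ (p1:ℕ) then x ^ (l*((p1:ℕ)-(j:ℕ))) else 0) else 0 := by
    intro p1
    rw [Finset.sum_eq_single r]
    · by_cases hrs : r = s <;> simp [hrs]
    · intro b _ hb; simp [hb]
    · simp
  rw [Finset.sum_congr rfl fun p1 _ => inner p1]
  by_cases hrs : r = s
  case neg =>
    have h1 : ¬((i:ℕ) = k ∧ r = s) := fun h => hrs h.2
    have h2 : ¬ ((i,r) = (j,s)) := by
      intro h; exact hrs (congrArg Prod.snd h)
    simp [hrs, h1, h2]
  subst hrs
  simp only [if_true, eq_self_iff_true, and_true, Prod.mk.injEq]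
  set A : ℂ := -(if (j:ℕ) ≤ (i:ℕ) then x ^ (l*((i:ℕ)-(j:ℕ))) else 0) with hA
  set B : ℂ := x^l * (if (j:ℕ) ≤ (i:ℕ)-1 then x ^ (l*((i:ℕ)-1-(j:ℕ))) else 0) with hB
  have expand : ∀ p1 : Fin k,
      (if (i:ℕ) = (p1:ℕ) then (-1:ℂ) else if (i:ℕ) = (p1:ℕ)+1 then x^l else 0) *
        (if (j:ℕ) ≤ (p1:ℕ) then x ^ (l*((p1:ℕ)-(j:ℕ))) else 0)
      = (if (p1:ℕ) = (i:ℕ) then A else 0)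
        + (if (p1:ℕ) = (i:ℕ)-1 ∧ 1 ≤ (i:ℕ) then B else 0) := by
    intro p1
    by_cases h1 : (i:ℕ) = (p1:ℕ)
    · have h1' : (p1:ℕ) = (i:ℕ) := h1.symm
      have hno : ¬((p1:ℕ) = (i:ℕ)-1 ∧ 1 ≤ (i:ℕ)) := by omega
      rw [if_pos h1, if_pos h1', if_neg hno, add_zero, hA]
      have hle : ((j:ℕ) ≤ (p1:ℕ)) = ((j:ℕ) ≤ (i:ℕ)) := by
        simp only [eq_iff_iff]; omega
      have hsub : (p1:ℕ) - (j:ℕ) = (i:ℕ)-(j:ℕ) := by omega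
      simp only [hle, hsub]
      split_ifs <;> ring
    · by_cases h2 : (i:ℕ) = (p1:ℕ)+1
      · have h2' : (p1:ℕ) = (i:ℕ)-1 ∧ 1 ≤ (i:ℕ) := by omega
        have h1' : ¬ (p1:ℕ) = (i:ℕ) := by omega
        have hsub : (p1:ℕ) - (j:ℕ) = (i:ℕ)-1-(j:ℕ) := by omega
        have hle : ((j:ℕ) ≤ (p1:ℕ)) = ((j:ℕ) ≤ (i:ℕ)-1) := by
          simp only [eq_iff_iff]; omega
        rw [if_neg h1, if_pos h2, if_neg h1', if_pos h2', zero_add, hB]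
        simp only [hle, hsub]
      · have h1' : ¬ (p1:ℕ) = (i:ℕ) := fun h => h1 h.symm
        have h2' : ¬((p1:ℕ) = (i:ℕ)-1 ∧ 1 ≤ (i:ℕ)) := by omega
        simp [h1, h2, h1', h2']
  rw [Finset.sum_congr rfl fun p1 _ => expand p1, Finset.sum_add_distrib,
    sum_fin_ite, sum_fin_ite']
  have hij : (i = j) ↔ ((i:ℕ) = (j:ℕ)) := Fin.ext_iff
  by_cases hik : (i:ℕ) < k
  · rw [dif_pos hik]
    have hiknot : ¬ (i:ℕ) = k := by omega
    rw [if_neg hiknot]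
    by_cases hji : (j:ℕ) ≤ (i:ℕ)
    · by_cases hjie : (j:ℕ) = (i:ℕ)
      · -- i = j < k
        have hieq : i = j := hij.mpr hjie.symm
        rw [if_pos hieq]
        rw [hA, if_pos hji]
        have hsub0 : (i:ℕ) - (j:ℕ) = 0 := by omega
        rw [hsub0, Nat.mul_zero, pow_zero]
        by_cases h1i : 1 ≤ (i:ℕ)
        · rw [dif_pos (show (i:ℕ)-1 < k ∧ 1 ≤ (i:ℕ) from ⟨by omega, h1i⟩)]
          rw [hB, if_neg (show ¬ (j:ℕ) ≤ (i:ℕ)-1 by omega)]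
          ring
        · rw [dif_neg (show ¬((i:ℕ)-1 < k ∧ 1 ≤ (i:ℕ)) by omega)]
          ring
      · -- j < i < k
        have h1i : 1 ≤ (i:ℕ) := by omega
        have hne : ¬ i = j := fun h => hjie ((hij.mp h).symm)
        rw [if_neg hne]
        rw [dif_pos (show (i:ℕ)-1 < k ∧ 1 ≤ (i:ℕ) from ⟨by omega, h1i⟩)]
        rw [hA, hB, if_pos hji, if_pos (show (j:ℕ) ≤ (i:ℕ)-1 by omega)]
        rw [pow_shift l (i:ℕ) (j:ℕ) x (by omega)]
        ring
    · -- i < j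
      have hne : ¬ i = j := fun h => hji (le_of_eq ((hij.mp h).symm))
      rw [if_neg hne, hA, if_neg hji]
      rw [hB, if_neg (show ¬ (j:ℕ) ≤ (i:ℕ)-1 by omega)]
      by_cases h1i : (i:ℕ)-1 < k ∧ 1 ≤ (i:ℕ)
      · rw [dif_pos h1i]; ring
      · rw [dif_neg h1i]; ring
  · -- i = k
    have hik0 : (i:ℕ) = k := by omega
    rw [dif_neg (by omega), if_pos hik0]
    by_cases hjk : (j:ℕ) = k
    · have hieq : i = j := hij.mpr (by omega)
      rw [if_pos hieq]
      have h4 : k - (j:ℕ) = 0 := by omega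
      rw [h4, Nat.mul_zero, pow_zero]
      by_cases h1i : (i:ℕ)-1 < k ∧ 1 ≤ (i:ℕ)
      · rw [dif_pos h1i, hB, if_neg (show ¬ (j:ℕ) ≤ (i:ℕ)-1 by omega)]
        ring
      · rw [dif_neg h1i]; ring
    · -- j < k = i
      have hne : ¬ i = j := fun h => hjk (by omega)
      rw [if_neg hne]
      rw [dif_pos (show (i:ℕ)-1 < k ∧ 1 ≤ (i:ℕ) by omega)]
      rw [hB, if_pos (show (j:ℕ) ≤ (i:ℕ)-1 by omega)]
      have : (i:ℕ)-1-(j:ℕ) = k-1-(j:ℕ) := by omega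
      rw [this, pow_shift l k (j:ℕ) x (by omega)]
      ring

lemma mpEval_apply {α β : Type*} (N : ℕ) (C : ℕ → Matrix α β ℂ) (x : ℂ) (a : α) (b : β) :
    (∑ i ∈ Finset.range (N + 1), x ^ i • C i) a b
      = ∑ i ∈ Finset.range (N + 1), x ^ i * C i a b := by
  simp [Matrix.sum_apply]

lemma Cmat_mul {n k l : ℕ} {x : ℂ} (U : Matrix (Fin (k+1) × Fin n) (Fin n) ℂ) :
    Cmat n k l x * U
      = Matrix.of fun q c => if (q.1:ℕ) = k then ((LamI n k l x)ᵀ * U) q.2 c else 0 := by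
  ext q c
  simp only [Matrix.mul_apply, Cmat, LamI, Matrix.of_apply, Matrix.transpose_apply]
  by_cases hq : (q.1:ℕ) = k
  · simp only [hq, true_and, if_true, eq_self_iff_true]
    apply Finset.sum_congr rfl
    intro q' _
    congr 1
    by_cases h : q.2 = q'.2
    · rw [if_pos h, if_pos h.symm]
    · rw [if_neg h, if_neg (fun hh => h hh.symm)]
  · simp [hq]

lemma LkI_decomp (n k l : ℕ) (x : ℂ) :
    LkI n k l x = LkI0 n k + x ^ l • LkI1 n k := by
  ext p q
  simp only [LkI, LkI0, LkI1, Matrix.of_apply, Matrix.add_apply, Matrix.smul_apply,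
    smul_eq_mul]
  by_cases h : p.2 = q.2
  · by_cases h1 : (q.1:ℕ) = (p.1:ℕ)
    · have h2 : ¬ (q.1:ℕ) = (p.1:ℕ)+1 := by omega
      simp [h, h1, h2]
    · by_cases h2 : (q.1:ℕ) = (p.1:ℕ)+1
      · simp [h, h1, h2]
      · simp [h, h1, h2]
  · simp [h]

lemma sum_two_ite (l : ℕ) (hl : 1 ≤ l) (x a0 a1 : ℂ) :
    (∑ i ∈ Finset.range (l + 1), x ^ i * (if i = 0 then a0 else if i = l then a1 else 0))
      = a0 + x ^ l * a1 := by
  rw [Finset.sum_eq_add_of_mem 0 l (by simp) (by simp) (by omega)]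
  · rw [pow_zero, one_mul, if_pos rfl, if_neg (by omega : ¬ l = 0), if_pos rfl]
  · intro c _ hc
    simp [hc.1, hc.2]

lemma sum_two_ite_der (l : ℕ) (hl : 1 ≤ l) (x a0 a1 : ℂ) :
    (∑ i ∈ Finset.range (l + 1),
        ((i:ℂ) * x ^ (i-1)) * (if i = 0 then a0 else if i = l then a1 else 0))
      = ((l:ℂ) * x ^ (l-1)) * a1 := by
  rw [Finset.sum_eq_single l]
  · rw [if_neg (by omega : ¬ l = 0), if_pos rfl]
  · intro c _ hc
    by_cases hc0 : c = 0
    · simp [hc0]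
    · simp [hc0, hc]
  · simp

lemma sum_smul_apply {α β : Type*} (s : Finset ℕ) (f : ℕ → ℂ) (C : ℕ → Matrix α β ℂ)
    (a : α) (b : β) :
    (∑ i ∈ s, f i • C i) a b = ∑ i ∈ s, f i * C i a b := by
  simp [Matrix.sum_apply]

lemma mpEval_Lcal (n l ε η : ℕ) (hl : 1 ≤ l)
    (M : ℕ → Matrix (Fin (η + 1) × Fin n) (Fin (ε + 1) × Fin n) ℂ) (x : ℂ) :
    mpEval l (LcalCoef n l ε η M) x
      = Matrix.fromBlocks (mpEval l M x) (LkI n η l x)ᵀ (LkI n ε l x) 0 := by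
  ext r c
  rcases r with a | a <;> rcases c with b | b
  · simp [mpEval, LcalCoef, sum_smul_apply, Matrix.fromBlocks_apply₁₁]
  · simp only [mpEval, LcalCoef, sum_smul_apply, Matrix.fromBlocks_apply₁₂,
      apply_ite (fun m : Matrix (Fin (η+1) × Fin n) (Fin η × Fin n) ℂ => m a b),
      Matrix.zero_apply]
    rw [sum_two_ite l hl, LkI_decomp]
    simp
  · simp only [mpEval, LcalCoef, sum_smul_apply, Matrix.fromBlocks_apply₂₁,
      apply_ite (fun m : Matrix (Fin ε × Fin n) (Fin (ε+1) × Fin n) ℂ => m a b),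
      Matrix.zero_apply]
    rw [sum_two_ite l hl, LkI_decomp]
    simp
  · simp [mpEval, LcalCoef, sum_smul_apply]

lemma mpDer_Lcal (n l ε η : ℕ) (hl : 1 ≤ l)
    (M : ℕ → Matrix (Fin (η + 1) × Fin n) (Fin (ε + 1) × Fin n) ℂ) (x : ℂ) :
    mpDer l (LcalCoef n l ε η M) x
      = Matrix.fromBlocks (mpDer l M x) (((l:ℂ) * x ^ (l-1)) • (LkI1 n η)ᵀ)
          (((l:ℂ) * x ^ (l-1)) • LkI1 n ε) 0 := by
  ext r c
  rcases r with a | a <;> rcases c with b | b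
  · simp [mpDer, LcalCoef, sum_smul_apply, Matrix.fromBlocks_apply₁₁]
  · simp only [mpDer, LcalCoef, sum_smul_apply, Matrix.fromBlocks_apply₁₂,
      apply_ite (fun m : Matrix (Fin (η+1) × Fin n) (Fin η × Fin n) ℂ => m a b),
      Matrix.zero_apply]
    rw [sum_two_ite_der l hl]
    simp [mul_assoc]
  · simp only [mpDer, LcalCoef, sum_smul_apply, Matrix.fromBlocks_apply₂₁,
      apply_ite (fun m : Matrix (Fin ε × Fin n) (Fin (ε+1) × Fin n) ℂ => m a b),
      Matrix.zero_apply]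
    rw [sum_two_ite_der l hl]
    simp [mul_assoc]
  · simp [mpDer, LcalCoef, sum_smul_apply]

def dLamI (n k l : ℕ) (x : ℂ) : Matrix (Fin (k + 1) × Fin n) (Fin n) ℂ :=
  Matrix.of fun q c =>
    if q.2 = c then ((l * (k - (q.1:ℕ)) : ℕ) : ℂ) * x ^ (l * (k - (q.1:ℕ)) - 1) else 0

lemma sum_ite_le (k m : ℕ) (c : ℂ) :
    (∑ i ∈ Finset.range k, if m ≤ i then c else 0) = ((k - m : ℕ) : ℂ) * c := by
  induction k with
  | zero => simp
  | succ k ih =>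
    rw [Finset.sum_range_succ, ih]
    by_cases h : m ≤ k
    · rw [if_pos h]
      have : k + 1 - m = (k - m) + 1 := by omega
      rw [this]; push_cast; ring
    · rw [if_neg h]
      have h1 : k + 1 - m = 0 := by omega
      have h2 : k - m = 0 := by omega
      rw [h1, h2]; simp

lemma L1_mul_Lam (n k l : ℕ) (x : ℂ) :
    LkI1 n k * LamI n k l x
      = Matrix.of fun p c => if p.2 = c then x ^ (l * (k - 1 - (p.1:ℕ))) else 0 := by
  ext p c
  simp only [Matrix.mul_apply, LkI1, LamI, Matrix.of_apply, Fintype.sum_prod_type]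
  have inner : ∀ j : Fin (k+1), ∑ s : Fin n,
      (if p.2 = s ∧ (j:ℕ) = (p.1:ℕ)+1 then (1:ℂ) else 0) * (if s = c then x ^ (l*(k-(j:ℕ))) else 0)
      = if (j:ℕ) = (p.1:ℕ)+1 ∧ p.2 = c then x ^ (l*(k-(j:ℕ))) else 0 := by
    intro j
    rw [Finset.sum_eq_single p.2]
    · by_cases h1 : (j:ℕ) = (p.1:ℕ)+1 <;> by_cases h2 : p.2 = c <;> simp [h1, h2]
    · intro b _ hb
      rw [if_neg (show ¬(p.2 = b ∧ (j:ℕ) = (p.1:ℕ)+1) from fun h => hb h.1.symm), zero_mul]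
    · simp
  rw [Finset.sum_congr rfl fun j _ => inner j]
  by_cases hpc : p.2 = c
  · simp only [hpc, and_true, if_true, eq_self_iff_true]
    rw [sum_fin_ite ((p.1:ℕ)+1) (fun j => x ^ (l*(k-(j:ℕ))))]
    rw [dif_pos (show (p.1:ℕ)+1 < k+1 by omega)]
    show x ^ (l * (k - ((p.1:ℕ)+1))) = _
    have : k - ((p.1:ℕ)+1) = k - 1 - (p.1:ℕ) := by omega
    rw [this]
  · simp [hpc]

lemma Rt_mul_L1_Lam (n k l : ℕ) (hl : 1 ≤ l) (x : ℂ) :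
    ((l:ℂ) * x ^ (l-1)) • ((Rmat n k l x)ᵀ * (LkI1 n k * LamI n k l x))
      = dLamI n k l x := by
  rw [L1_mul_Lam]
  ext q c
  simp only [Matrix.smul_apply, Matrix.mul_apply, Matrix.transpose_apply, Rmat, dLamI,
    Matrix.of_apply, Fintype.sum_prod_type, smul_eq_mul]
  have inner : ∀ p1 : Fin k, ∑ p2 : Fin n,
      (if p2 = q.2 ∧ (q.1:ℕ) ≤ (p1:ℕ) then x ^ (l*((p1:ℕ)-(q.1:ℕ))) else 0) *
        (if p2 = c then x ^ (l*(k-1-(p1:ℕ))) else 0)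
      = if q.2 = c ∧ (q.1:ℕ) ≤ (p1:ℕ) then x ^ (l*(k-1-(q.1:ℕ))) else 0 := by
    intro p1
    rw [Finset.sum_eq_single q.2]
    · by_cases h1 : q.2 = c
      · by_cases h2 : (q.1:ℕ) ≤ (p1:ℕ)
        · simp only [h1, h2, and_true, true_and, if_true, eq_self_iff_true, ← pow_add]
          congr 1
          have hp := p1.isLt
          rw [← Nat.mul_add]
          congr 1
          omega
        · simp [h1, h2]
      · by_cases h2 : (q.1:ℕ) ≤ (p1:ℕ) <;> simp [h1, h2]
    · intro b _ hb
      simp [hb]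
    · simp
  rw [Finset.sum_congr rfl fun p1 _ => inner p1]
  by_cases hqc : q.2 = c
  · simp only [hqc, true_and, if_true, eq_self_iff_true]
    rw [show (∑ p1 : Fin k, if (q.1:ℕ) ≤ (p1:ℕ) then x ^ (l*(k-1-(q.1:ℕ))) else 0)
        = ∑ i ∈ Finset.range k, if (q.1:ℕ) ≤ i then x ^ (l*(k-1-(q.1:ℕ))) else 0 from
      Fin.sum_univ_eq_sum_range (fun i => if (q.1:ℕ) ≤ i then x ^ (l*(k-1-(q.1:ℕ))) else 0) k]
    rw [sum_ite_le k (q.1:ℕ) _]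
    by_cases hq : (q.1:ℕ) < k
    · have e1 : l * (k - (q.1:ℕ)) - 1 = (l-1) + l * (k-1-(q.1:ℕ)) := by
        obtain ⟨t, ht⟩ : ∃ t, k - (q.1:ℕ) = t + 1 := ⟨k - (q.1:ℕ) - 1, by omega⟩
        have ht2 : k - 1 - (q.1:ℕ) = t := by omega
        rw [ht, ht2, Nat.mul_succ]
        omega
      rw [e1, pow_add]
      push_cast
      ring
    · have h0 : k - (q.1:ℕ) = 0 := by omega
      rw [h0]
      simp
  · simp [hqc]

lemma hasDerivAt_mpEval_entry {α β : Type*} (N : ℕ) (C : ℕ → Matrix α β ℂ) (x : ℂ)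
    (a : α) (b : β) :
    HasDerivAt (fun t => mpEval N C t a b) (mpDer N C x a b) x := by
  simp only [mpEval, mpDer, sum_smul_apply]
  apply HasDerivAt.fun_sum
  intro i _
  simpa using (hasDerivAt_pow i x).mul_const (C i a b)

lemma hasDerivAt_LamI_entry (n k l : ℕ) (x : ℂ) (p : Fin (k+1) × Fin n) (c : Fin n) :
    HasDerivAt (fun t => LamI n k l t p c) (dLamI n k l x p c) x := by
  simp only [LamI, dLamI, Matrix.of_apply]
  by_cases h : p.2 = c
  · simp only [h, if_true, eq_self_iff_true]
    exact hasDerivAt_pow _ x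
  · simp only [h, if_false]
    exact hasDerivAt_const x 0

lemma dp3 {m n p : Type*} [Fintype m] [Fintype n] [Fintype p]
    (P : Matrix m n ℂ) (Q : Matrix m p ℂ) (a : n → ℂ) (b : p → ℂ) :
    (P *ᵥ a) ⬝ᵥ (Q *ᵥ b) = a ⬝ᵥ ((Pᵀ * Q) *ᵥ b) := by
  rw [Matrix.dotProduct_mulVec, ← Matrix.mulVec_transpose, Matrix.mulVec_mulVec,
    Matrix.dotProduct_mulVec (v := a), ← Matrix.mulVec_transpose, Matrix.transpose_mul,
    Matrix.transpose_transpose]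

lemma Hmat_mulVec (n l p q : ℕ) (N : ℂ → Matrix (Fin (q + 1) × Fin n) (Fin (p + 1) × Fin n) ℂ)
    (x : ℂ) (v : Fin n → ℂ) :
    (Hmat n l p q N x) *ᵥ v
      = Sum.elim ((LamI n p l x) *ᵥ v) ((Rmat n q l x * (N x * LamI n p l x)) *ᵥ v) := by
  ext r
  cases r <;> rfl

lemma right_eig (n l k₁ k₂ : ℕ) (x0 : ℂ)
    (W : Matrix (Fin (k₂+1) × Fin n) (Fin (k₁+1) × Fin n) ℂ) (v : Fin n → ℂ)
    (hv : ((LamI n k₂ l x0)ᵀ * W * LamI n k₁ l x0) *ᵥ v = 0) :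
    (Matrix.fromBlocks W (LkI n k₂ l x0)ᵀ (LkI n k₁ l x0) 0) *ᵥ
      (Sum.elim ((LamI n k₁ l x0) *ᵥ v)
        ((Rmat n k₂ l x0 * (W * LamI n k₁ l x0)) *ᵥ v)) = 0 := by
  rw [Matrix.fromBlocks_mulVec]
  have hcomp1 : (Sum.elim ((LamI n k₁ l x0) *ᵥ v)
      ((Rmat n k₂ l x0 * (W * LamI n k₁ l x0)) *ᵥ v)) ∘ Sum.inl = (LamI n k₁ l x0) *ᵥ v := rfl
  have hcomp2 : (Sum.elim ((LamI n k₁ l x0) *ᵥ v)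
      ((Rmat n k₂ l x0 * (W * LamI n k₁ l x0)) *ᵥ v)) ∘ Sum.inr
      = (Rmat n k₂ l x0 * (W * LamI n k₁ l x0)) *ᵥ v := rfl
  rw [hcomp1, hcomp2]
  have htop : W *ᵥ ((LamI n k₁ l x0) *ᵥ v)
      + (LkI n k₂ l x0)ᵀ *ᵥ ((Rmat n k₂ l x0 * (W * LamI n k₁ l x0)) *ᵥ v) = 0 := by
    rw [Matrix.mulVec_mulVec, Matrix.mulVec_mulVec, ← Matrix.mul_assoc,
      LkIt_mul_Rmat, Matrix.sub_mul, Matrix.one_mul,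
      Matrix.sub_mulVec, Cmat_mul]
    have : (Matrix.of fun (q : Fin (k₂+1) × Fin n) c =>
        if (q.1:ℕ) = k₂ then ((LamI n k₂ l x0)ᵀ * (W * LamI n k₁ l x0)) q.2 c else 0) *ᵥ v
        = 0 := by
      ext q
      by_cases hq : (q.1:ℕ) = k₂
      · have : ((LamI n k₂ l x0)ᵀ * (W * LamI n k₁ l x0)) *ᵥ v = 0 := by
          rw [← Matrix.mul_assoc]; exact hv
        have h2 := congrFun this q.2
        simp only [Matrix.mulVec, Matrix.of_apply, hq, if_true, eq_self_iff_true,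
          Pi.zero_apply] at h2 ⊢
        exact h2
      · simp [Matrix.mulVec, Matrix.of_apply, hq, dotProduct]
    rw [this]
    abel
  have hbot : (LkI n k₁ l x0) *ᵥ ((LamI n k₁ l x0) *ᵥ v)
      + (0 : Matrix (Fin k₁ × Fin n) (Fin k₂ × Fin n) ℂ) *ᵥ
        ((Rmat n k₂ l x0 * (W * LamI n k₁ l x0)) *ᵥ v) = 0 := by
    rw [Matrix.mulVec_mulVec, LkI_mul_LamI, Matrix.zero_mulVec, Matrix.zero_mulVec]
    simp
  rw [htop, hbot]
  ext r
  cases r <;> simp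

lemma star_mulVec_map {m n : Type*} [Fintype n] (A : Matrix m n ℂ) (v : n → ℂ) :
    star (A *ᵥ v) = (A.map (starRingEnd ℂ)) *ᵥ (star v) := by
  ext r
  simp [Matrix.mulVec, dotProduct, Matrix.map_apply, star_sum, star_mul']

lemma LamI_map (n k l : ℕ) (x : ℂ) :
    (LamI n k l (starRingEnd ℂ x)).map (starRingEnd ℂ) = LamI n k l x := by
  ext p c
  simp only [LamI, Matrix.map_apply, Matrix.of_apply, apply_ite (starRingEnd ℂ), map_pow,
    Complex.conj_conj, map_zero]

lemma Rmat_map (n k l : ℕ) (x : ℂ) :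
    (Rmat n k l (starRingEnd ℂ x)).map (starRingEnd ℂ) = Rmat n k l x := by
  ext p q
  simp only [Rmat, Matrix.map_apply, Matrix.of_apply, apply_ite (starRingEnd ℂ), map_pow,
    Complex.conj_conj, map_zero]

lemma conjT_map {m n : Type*} (W : Matrix m n ℂ) :
    (Wᴴ).map (starRingEnd ℂ) = Wᵀ := by
  ext a b
  simp [Matrix.conjTranspose_apply, Matrix.map_apply, Matrix.transpose_apply]

lemma star_w_eq (n l ε η : ℕ) (W : Matrix (Fin (η+1) × Fin n) (Fin (ε+1) × Fin n) ℂ)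
    (x0 : ℂ) (y : Fin n → ℂ) :
    star ((Hmat n l η ε (fun _ => Wᴴ) (starRingEnd ℂ x0)) *ᵥ y)
      = (Hmat n l η ε (fun _ => Wᵀ) x0) *ᵥ (star y) := by
  have key : (Rmat n ε l (starRingEnd ℂ x0) * (Wᴴ * LamI n η l (starRingEnd ℂ x0))).map
      (starRingEnd ℂ) = Rmat n ε l x0 * (Wᵀ * LamI n η l x0) := by
    rw [Matrix.map_mul, Matrix.map_mul, LamI_map, Rmat_map, conjT_map]
  have hH : (Hmat n l η ε (fun _ => Wᴴ) (starRingEnd ℂ x0)).map (starRingEnd ℂ)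
      = Hmat n l η ε (fun _ => Wᵀ) x0 := by
    ext r c
    cases r with
    | inl a =>
      show (starRingEnd ℂ) (LamI n η l (starRingEnd ℂ x0) a c) = LamI n η l x0 a c
      exact congrFun (congrFun (LamI_map n η l x0) a) c
    | inr a =>
      show (starRingEnd ℂ) ((Rmat n ε l (starRingEnd ℂ x0) *
          (Wᴴ * LamI n η l (starRingEnd ℂ x0))) a c)
        = (Rmat n ε l x0 * (Wᵀ * LamI n η l x0)) a c
      exact congrFun (congrFun key a) c
  rw [star_mulVec_map, hH]

lemma expand3 {n e h : ℕ} (U : Matrix (Fin (h+1) × Fin n) (Fin n) ℂ)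
    (V : Matrix (Fin (h+1) × Fin n) (Fin (e+1) × Fin n) ℂ)
    (T : Matrix (Fin (e+1) × Fin n) (Fin n) ℂ) (x ybar : Fin n → ℂ) :
    ybar ⬝ᵥ ((Uᵀ * (V * T)) *ᵥ x)
      = ∑ r : Fin n, ∑ c : Fin n, ∑ a : Fin (h+1) × Fin n, ∑ b : Fin (e+1) × Fin n,
          ybar r * x c * (U a r * (V a b * T b c)) := by
  simp only [dotProduct, Matrix.mulVec, Matrix.mul_apply, Matrix.transpose_apply,
    Finset.mul_sum, Finset.sum_mul]
  apply Finset.sum_congr rfl; intro r _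
  apply Finset.sum_congr rfl; intro c _
  apply Finset.sum_congr rfl; intro a _
  apply Finset.sum_congr rfl; intro b _
  ring

lemma expand2 {α β : Type*} [Fintype α] [Fintype β] (Q : Matrix α β ℂ)
    (x : β → ℂ) (ybar : α → ℂ) :
    ybar ⬝ᵥ (Q *ᵥ x) = ∑ r : α, ∑ c : β, ybar r * x c * Q r c := by
  simp only [dotProduct, Matrix.mulVec, Finset.mul_sum]
  apply Finset.sum_congr rfl; intro r _
  apply Finset.sum_congr rfl; intro c _
  ring

lemma deriv_main (n d l ε η : ℕ)
    (M : ℕ → Matrix (Fin (η + 1) × Fin n) (Fin (ε + 1) × Fin n) ℂ)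
    (A : ℕ → Matrix (Fin n) (Fin n) ℂ)
    (hM : ∀ t : ℂ, (LamI n η l t)ᵀ * mpEval l M t * LamI n ε l t = mpEval d A t)
    (x0 : ℂ) (x ybar : Fin n → ℂ) :
    ybar ⬝ᵥ (((dLamI n η l x0)ᵀ * (mpEval l M x0 * LamI n ε l x0)
        + (LamI n η l x0)ᵀ * (mpDer l M x0 * LamI n ε l x0)
        + (LamI n η l x0)ᵀ * (mpEval l M x0 * dLamI n ε l x0)) *ᵥ x)
      = ybar ⬝ᵥ (mpDer d A x0 *ᵥ x) := by
  set F : ℂ → ℂ := fun t => ∑ r : Fin n, ∑ c : Fin n, ∑ a : Fin (η+1) × Fin n,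
    ∑ b : Fin (ε+1) × Fin n,
      ybar r * x c * (LamI n η l t a r * (mpEval l M t a b * LamI n ε l t b c)) with hF
  have hf : HasDerivAt F
      (∑ r : Fin n, ∑ c : Fin n, ∑ a : Fin (η+1) × Fin n, ∑ b : Fin (ε+1) × Fin n,
        ybar r * x c *
          (dLamI n η l x0 a r * (mpEval l M x0 a b * LamI n ε l x0 b c)
            + LamI n η l x0 a r * (mpDer l M x0 a b * LamI n ε l x0 b c
              + mpEval l M x0 a b * dLamI n ε l x0 b c))) x0 := by
    apply HasDerivAt.fun_sum; intro r _
    apply HasDerivAt.fun_sum; intro c _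
    apply HasDerivAt.fun_sum; intro a _
    apply HasDerivAt.fun_sum; intro b _
    exact ((hasDerivAt_LamI_entry n η l x0 a r).mul
      ((hasDerivAt_mpEval_entry l M x0 a b).mul
        (hasDerivAt_LamI_entry n ε l x0 b c))).const_mul (ybar r * x c)
  have hFg : F = fun t => ∑ r : Fin n, ∑ c : Fin n, ybar r * x c * mpEval d A t r c := by
    funext t
    rw [hF]
    beta_reduce
    rw [← expand3, ← Matrix.mul_assoc, hM t, expand2]
  have hg : HasDerivAt F
      (∑ r : Fin n, ∑ c : Fin n, ybar r * x c * mpDer d A x0 r c) x0 := by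
    rw [hFg]
    apply HasDerivAt.fun_sum; intro r _
    apply HasDerivAt.fun_sum; intro c _
    exact (hasDerivAt_mpEval_entry d A x0 r c).const_mul (ybar r * x c)
  have heq := hf.unique hg
  calc ybar ⬝ᵥ (((dLamI n η l x0)ᵀ * (mpEval l M x0 * LamI n ε l x0)
        + (LamI n η l x0)ᵀ * (mpDer l M x0 * LamI n ε l x0)
        + (LamI n η l x0)ᵀ * (mpEval l M x0 * dLamI n ε l x0)) *ᵥ x)
      = ∑ r : Fin n, ∑ c : Fin n, ∑ a : Fin (η+1) × Fin n, ∑ b : Fin (ε+1) × Fin n,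
          ybar r * x c *
            (dLamI n η l x0 a r * (mpEval l M x0 a b * LamI n ε l x0 b c)
              + LamI n η l x0 a r * (mpDer l M x0 a b * LamI n ε l x0 b c
                + mpEval l M x0 a b * dLamI n ε l x0 b c)) := by
        rw [Matrix.add_mulVec, Matrix.add_mulVec, dotProduct_add,
          dotProduct_add, expand3, expand3, expand3]
        simp only [mul_add, Finset.sum_add_distrib]
        rw [add_assoc]
    _ = ∑ r : Fin n, ∑ c : Fin n, ybar r * x c * mpDer d A x0 r c := heq
    _ = ybar ⬝ᵥ (mpDer d A x0 *ᵥ x) := (expand2 _ _ _).symm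

lemma wLz (n l ε η : ℕ) (hl : 1 ≤ l) (x0 : ℂ)
    (E D : Matrix (Fin (η+1) × Fin n) (Fin (ε+1) × Fin n) ℂ) (x ybar : Fin n → ℂ) :
    (Sum.elim ((LamI n η l x0) *ᵥ ybar) ((Rmat n ε l x0 * (Eᵀ * LamI n η l x0)) *ᵥ ybar)) ⬝ᵥ
      ((Matrix.fromBlocks D (((l:ℂ) * x0^(l-1)) • (LkI1 n η)ᵀ)
          (((l:ℂ) * x0^(l-1)) • LkI1 n ε) 0) *ᵥ
        (Sum.elim ((LamI n ε l x0) *ᵥ x) ((Rmat n η l x0 * (E * LamI n ε l x0)) *ᵥ x)))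
    = ybar ⬝ᵥ (((dLamI n η l x0)ᵀ * (E * LamI n ε l x0)
        + (LamI n η l x0)ᵀ * (D * LamI n ε l x0)
        + (LamI n η l x0)ᵀ * (E * dLamI n ε l x0)) *ᵥ x) := by
  have hM1 : (dLamI n η l x0)ᵀ * (E * LamI n ε l x0)
      = ((l:ℂ) * x0^(l-1)) • ((LamI n η l x0)ᵀ *
          ((LkI1 n η)ᵀ * (Rmat n η l x0 * (E * LamI n ε l x0)))) := by
    rw [← Rt_mul_L1_Lam n η l hl x0]
    simp only [Matrix.transpose_smul, Matrix.transpose_mul, Matrix.transpose_transpose,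
      Matrix.smul_mul, Matrix.mul_assoc]
  have hM2 : (LamI n η l x0)ᵀ * (E * dLamI n ε l x0)
      = ((l:ℂ) * x0^(l-1)) • ((Rmat n ε l x0 * (Eᵀ * LamI n η l x0))ᵀ *
          (LkI1 n ε * LamI n ε l x0)) := by
    rw [← Rt_mul_L1_Lam n ε l hl x0]
    simp only [Matrix.transpose_smul, Matrix.transpose_mul, Matrix.transpose_transpose,
      Matrix.smul_mul, Matrix.mul_smul, Matrix.mul_assoc]
  rw [Matrix.fromBlocks_mulVec]
  simp only [Sum.elim_comp_inl, Sum.elim_comp_inr, Matrix.zero_mulVec, add_zero]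
  rw [sumElim_dotProduct_sumElim, dotProduct_add]
  rw [Matrix.add_mulVec, Matrix.add_mulVec, dotProduct_add, dotProduct_add]
  rw [hM1, hM2]
  simp only [Matrix.mulVec_mulVec, Matrix.smul_mul, Matrix.smul_mulVec,
    dotProduct_smul, smul_eq_mul, dp3, Matrix.transpose_mul,
    Matrix.transpose_transpose, Matrix.mul_assoc]
  ring

lemma LamI_mulVec_last (n k l : ℕ) (x0 : ℂ) (v : Fin n → ℂ) (r : Fin n) :
    (LamI n k l x0 *ᵥ v) (Fin.last k, r) = v r := by
  simp only [Matrix.mulVec, dotProduct, LamI, Matrix.of_apply, Fin.val_last,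
    Nat.sub_self, Nat.mul_zero, pow_zero, ite_mul, one_mul, zero_mul]
  rw [Finset.sum_ite_eq]
  simp

/-- For a simple eigenvalue `lam0` of `P` with right/left eigenvectors `x`, `y`, the
vectors `z = H(lam0; ε, η, M) x` and
`w = [Λ_η(conj lam0 ^ ℓ) ⊗ I_n ; R_ε(conj lam0 ^ ℓ) M(lam0)* (Λ_η(conj lam0 ^ ℓ) ⊗ I_n)] y`
are right/left eigenvectors of `ℒ` with eigenvalue `lam0`, and
`|w* ℒ′(lam0) z| = |y* P′(lam0) x|`. -/
theorem stmt13 (n d l ε η : ℕ) (hn : 0 < n) (hl : 1 ≤ l) (hd : d = l * (ε + η + 1))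
    (A : ℕ → Matrix (Fin n) (Fin n) ℂ) (hdeg : A d ≠ 0)
    (hreg : detPoly n d A ≠ 0)
    (M : ℕ → Matrix (Fin (η + 1) × Fin n) (Fin (ε + 1) × Fin n) ℂ)
    (hM : ∀ x : ℂ, (LamI n η l x)ᵀ * mpEval l M x * LamI n ε l x = mpEval d A x)
    (lam0 : ℂ) (hsimple : (detPoly n d A).rootMultiplicity lam0 = 1)
    (x y : Fin n → ℂ) (hx : x ≠ 0) (hy : y ≠ 0)
    (hPx : (mpEval d A lam0).mulVec x = 0)
    (hPy : (mpEval d A lam0).vecMul (star y) = 0)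
    (z : ((Fin (ε + 1) × Fin n) ⊕ (Fin η × Fin n)) → ℂ)
    (w : ((Fin (η + 1) × Fin n) ⊕ (Fin ε × Fin n)) → ℂ)
    (hz : z = (Hmat n l ε η (mpEval l M) lam0).mulVec x)
    (hw : w = (Hmat n l η ε (fun _ => (mpEval l M lam0)ᴴ)
                (starRingEnd ℂ lam0)).mulVec y) :
    z ≠ 0 ∧ w ≠ 0 ∧
      (mpEval l (LcalCoef n l ε η M) lam0).mulVec z = 0 ∧
      (mpEval l (LcalCoef n l ε η M) lam0).vecMul (star w) = 0 ∧
      ‖dotProduct (star w) ((mpDer l (LcalCoef n l ε η M) lam0).mulVec z)‖ =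
        ‖dotProduct (star y) ((mpDer d A lam0).mulVec x)‖ := by
  have hz' : z = Sum.elim ((LamI n ε l lam0) *ᵥ x)
      ((Rmat n η l lam0 * (mpEval l M lam0 * LamI n ε l lam0)) *ᵥ x) := by
    rw [hz, Hmat_mulVec]
  have hsw : star w = Sum.elim ((LamI n η l lam0) *ᵥ (star y))
      ((Rmat n ε l lam0 * ((mpEval l M lam0)ᵀ * LamI n η l lam0)) *ᵥ (star y)) := by
    rw [hw, star_w_eq, Hmat_mulVec]
  have hvx : ((LamI n η l lam0)ᵀ * mpEval l M lam0 * LamI n ε l lam0) *ᵥ x = 0 := by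
    rw [hM lam0]; exact hPx
  have hvy : ((LamI n ε l lam0)ᵀ * (mpEval l M lam0)ᵀ * LamI n η l lam0) *ᵥ (star y) = 0 := by
    have ht : (LamI n ε l lam0)ᵀ * (mpEval l M lam0)ᵀ * LamI n η l lam0
        = (mpEval d A lam0)ᵀ := by
      rw [← hM lam0]
      simp only [Matrix.transpose_mul, Matrix.transpose_transpose, Matrix.mul_assoc]
    rw [ht, Matrix.mulVec_transpose, hPy]
  obtain ⟨r, hr⟩ : ∃ r, x r ≠ 0 := Function.ne_iff.mp hx
  obtain ⟨s, hs⟩ : ∃ s, y s ≠ 0 := Function.ne_iff.mp hy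
  refine ⟨?_, ?_, ?_, ?_, ?_⟩
  · intro h0
    apply hr
    have hzv : z (Sum.inl (Fin.last ε, r)) = x r := by
      rw [hz']; exact LamI_mulVec_last n ε l lam0 x r
    rw [h0] at hzv
    simpa using hzv.symm
  · intro h0
    apply hs
    have hwv : w (Sum.inl (Fin.last η, s)) = y s := by
      rw [hw, Hmat_mulVec]
      exact LamI_mulVec_last n η l (starRingEnd ℂ lam0) y s
    rw [h0] at hwv
    simpa using hwv.symm
  · rw [mpEval_Lcal n l ε η hl M lam0, hz']
    exact right_eig n l ε η lam0 (mpEval l M lam0) x hvx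
  · have hL : (mpEval l (LcalCoef n l ε η M) lam0)ᵀ *ᵥ (star w) = 0 := by
      rw [mpEval_Lcal n l ε η hl M lam0, Matrix.fromBlocks_transpose,
        Matrix.transpose_transpose, Matrix.transpose_zero, hsw]
      exact right_eig n l η ε lam0 (mpEval l M lam0)ᵀ (star y) hvy
    rw [← Matrix.mulVec_transpose]
    exact hL
  · show ‖(star w) ⬝ᵥ ((mpDer l (LcalCoef n l ε η M) lam0) *ᵥ z)‖ = _
    rw [mpDer_Lcal n l ε η hl M lam0, hz', hsw]
    rw [wLz n l ε η hl lam0 (mpEval l M lam0) (mpDer l M lam0) x (star y)]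
    rw [deriv_main n d l ε η M A hM lam0 x (star y)]

end
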